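/- Let X be a finite connected pre-ordered set and R a 2-torsion free commutative ring with unity. Then every Lie triple derivation of I(X,R) is proper: L = D + F where D is a derivation of I(X,R) and F maps I(X,R) into its centre and vanishes on all second commutators. -/

import Mathlib

open IncidenceAlgebra
open scoped Classical

variable {R X : Type*}

/-- The matrix unit `e_{x y}` of the incidence algebra (zero if `¬ x ≤ y`). -/
noncomputable def matrixUnit [CommRing R] [Preorder X] [DecidableEq X] (x y : X) :
    IncidenceAlgebra R X :=
  ⟨fun u v => if u = x ∧ v = y ∧ x ≤ y then 1 else 0, fun a b hab => by
    try dsimp only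
    split_ifs with h
    · exact absurd (by rw [h.1, h.2.1]; exact h.2.2) hab
    · rfl⟩

/-- The Lie bracket `[f,g] = fg - gf`. -/
def lieBr {A : Type*} [Ring A] (f g : A) : A := f * g - g * f

section Aux
set_option linter.unusedSectionVars false
variable [CommRing R] [Preorder X] [DecidableEq X] [LocallyFiniteOrder X]

lemma matrixUnit_apply (x y u v : X) :
    matrixUnit (R := R) x y u v = if u = x ∧ v = y ∧ x ≤ y then 1 else 0 := rfl

lemma mul_matrixUnit (f : IncidenceAlgebra R X) (x y s t : X) :
    ((f * matrixUnit x y : IncidenceAlgebra R X) s t) = if t = y ∧ x ≤ y then f s x else 0 := by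
  rw [mul_apply]
  by_cases h : t = y ∧ x ≤ y
  · obtain ⟨rfl, hxy⟩ := h
    simp only [matrixUnit_apply, hxy, and_true, mul_ite, mul_one, mul_zero, if_pos rfl,
      true_and]
    rw [Finset.sum_ite_eq' (Finset.Icc s t) x (fun z => f s z)]
    simp only [and_true, if_true]
    by_cases hx : x ∈ Finset.Icc s t
    · simp [hx]
    · simp only [hx, if_false]
      rw [Finset.mem_Icc] at hx
      push_neg at hx
      by_cases hsx : s ≤ x
      · exact absurd hxy (hx hsx)
      · exact (apply_eq_zero_of_not_le hsx f).symm
  · simp only [matrixUnit_apply, h, if_false]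
    refine Finset.sum_eq_zero fun z hz => ?_
    have : ¬(z = x ∧ t = y ∧ x ≤ y) := fun hc => h hc.2
    simp [this]

lemma matrixUnit_mul (f : IncidenceAlgebra R X) (x y s t : X) :
    ((matrixUnit x y * f : IncidenceAlgebra R X) s t) = if s = x ∧ x ≤ y then f y t else 0 := by
  rw [mul_apply]
  by_cases h : s = x ∧ x ≤ y
  · obtain ⟨rfl, hxy⟩ := h
    simp only [matrixUnit_apply, hxy, and_true, ite_mul, one_mul, zero_mul, if_pos rfl,
      true_and]
    rw [Finset.sum_ite_eq' (Finset.Icc s t) y (fun z => f z t)]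
    simp only [and_true, if_true]
    by_cases hy : y ∈ Finset.Icc s t
    · simp [hy]
    · simp only [hy, if_false]
      rw [Finset.mem_Icc] at hy
      push_neg at hy
      by_cases hyt : y ≤ t
      · exact absurd hyt (hy hxy)
      · exact (apply_eq_zero_of_not_le hyt f).symm
  · simp only [matrixUnit_apply, h, if_false]
    refine Finset.sum_eq_zero fun z hz => ?_
    have : ¬(s = x ∧ z = y ∧ x ≤ y) := fun hc => h ⟨hc.1, hc.2.2⟩
    simp [this]

end Aux

section Aux2
set_option linter.unusedSectionVars false
variable [CommRing R] [Preorder X] [DecidableEq X] [LocallyFiniteOrder X]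

lemma matrixUnit_mul_matrixUnit {x y z : X} (hxy : x ≤ y) (hyz : y ≤ z) :
    (matrixUnit x y * matrixUnit y z : IncidenceAlgebra R X) = matrixUnit x z := by
  ext s t hst
  rw [mul_matrixUnit]
  by_cases h : t = z
  · subst h
    simp only [hyz, and_true, if_true, matrixUnit_apply, hxy, hxy.trans hyz]
  · simp [matrixUnit_apply, h]

lemma matrixUnit_mul_matrixUnit_ne {y u : X} (h : y ≠ u) (x v : X) :
    (matrixUnit x y * matrixUnit u v : IncidenceAlgebra R X) = 0 := by
  ext s t hst
  rw [mul_matrixUnit]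
  simp only [matrixUnit_apply, IncidenceAlgebra.zero_apply]
  split_ifs with h1 h2 <;> simp_all

lemma matrixUnit_eq_zero {x y : X} (h : ¬ x ≤ y) : (matrixUnit x y : IncidenceAlgebra R X) = 0 := by
  ext s t hst
  simp only [matrixUnit_apply, IncidenceAlgebra.zero_apply]
  split_ifs with h1 <;> simp_all

lemma ia_sum_apply {ι : Type*} (s : Finset ι) (f : ι → IncidenceAlgebra R X) (u v : X) :
    (∑ i ∈ s, f i) u v = ∑ i ∈ s, f i u v := by
  classical
  induction s using Finset.induction with
  | empty => simp [IncidenceAlgebra.zero_apply]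
  | insert _ _ h ih => rw [Finset.sum_insert h, Finset.sum_insert h, IncidenceAlgebra.add_apply, ih]

lemma basis_decomp [Fintype X] (f : IncidenceAlgebra R X) :
    f = ∑ x : X, ∑ y : X, f x y • matrixUnit x y := by
  ext u v huv
  rw [ia_sum_apply]
  rw [Finset.sum_eq_single u]
  · rw [ia_sum_apply, Finset.sum_eq_single v]
    · simp [constSMul_apply, matrixUnit_apply, huv, smul_eq_mul]
    · intro y _ hy
      simp [constSMul_apply, matrixUnit_apply, Ne.symm hy, smul_eq_mul]
    · simp
  · intro x _ hx
    rw [ia_sum_apply]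
    refine Finset.sum_eq_zero fun y _ => ?_
    simp [constSMul_apply, matrixUnit_apply, Ne.symm hx, smul_eq_mul]
  · simp

lemma derivation_lieBr {A : Type*} [Ring A] (D : A → A)
    (hD : ∀ f g : A, D (f * g) = D f * g + f * D g)
    (hsub : ∀ f g : A, D (f - g) = D f - D g) (f g : A) :
    D (lieBr f g) = lieBr (D f) g + lieBr f (D g) := by
  simp only [lieBr, hsub, hD]
  abel

lemma derivation_isLTD' {A : Type*} [Ring A] (D : A → A)
    (hD : ∀ f g : A, D (f * g) = D f * g + f * D g)
    (hsub : ∀ f g : A, D (f - g) = D f - D g) (f g h : A) :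
    D (lieBr (lieBr f g) h) =
      lieBr (lieBr (D f) g) h + lieBr (lieBr f (D g)) h + lieBr (lieBr f g) (D h) := by
  rw [derivation_lieBr D hD hsub (lieBr f g) h, derivation_lieBr D hD hsub f g]
  simp only [lieBr]
  noncomm_ring


lemma lieBr_sub_left {A : Type*} [Ring A] (f g h : A) :
    lieBr (f - g) h = lieBr f h - lieBr g h := by
  simp only [lieBr]; noncomm_ring

lemma lieBr_sub_right {A : Type*} [Ring A] (f g h : A) :
    lieBr f (g - h) = lieBr f g - lieBr f h := by
  simp only [lieBr]; noncomm_ring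

lemma lieBr_neg_left {A : Type*} [Ring A] (f g : A) : lieBr (-f) g = -(lieBr f g) := by
  simp only [lieBr]; noncomm_ring

lemma lieBr_py {x y : X} (hxy : x ≤ y) (hne : x ≠ y) :
    lieBr (matrixUnit x y) (matrixUnit y y) = (matrixUnit x y : IncidenceAlgebra R X) := by
  rw [lieBr, matrixUnit_mul_matrixUnit hxy (le_refl y),
    matrixUnit_mul_matrixUnit_ne (Ne.symm hne), sub_zero]

lemma lieBr_px {x y : X} (hxy : x ≤ y) (hne : x ≠ y) :
    lieBr (matrixUnit x y) (matrixUnit x x) = -(matrixUnit x y : IncidenceAlgebra R X) := by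
  rw [lieBr, matrixUnit_mul_matrixUnit_ne (Ne.symm hne),
    matrixUnit_mul_matrixUnit (le_refl x) hxy, zero_sub]

lemma ia_mul_smul (r : R) (f g : IncidenceAlgebra R X) : f * (r • g) = r • (f * g) := by
  ext u v _
  rw [mul_apply, constSMul_apply, mul_apply, smul_eq_mul, Finset.mul_sum]
  exact Finset.sum_congr rfl fun z _ => by rw [constSMul_apply, smul_eq_mul]; ring

lemma ia_smul_mul (r : R) (f g : IncidenceAlgebra R X) : (r • f) * g = r • (f * g) := by
  ext u v _
  rw [mul_apply, constSMul_apply, mul_apply, smul_eq_mul, Finset.mul_sum]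
  exact Finset.sum_congr rfl fun z _ => by rw [constSMul_apply, smul_eq_mul]; ring

instance : SMulCommClass R (IncidenceAlgebra R X) (IncidenceAlgebra R X) :=
  ⟨fun r f g => (ia_mul_smul r f g).symm⟩

instance : IsScalarTower R (IncidenceAlgebra R X) (IncidenceAlgebra R X) :=
  ⟨fun r f g => ia_smul_mul r f g⟩

end Aux2

/-- `L` is a Lie triple derivation of the incidence algebra. -/
def IsLieTripleDer [CommRing R] [Preorder X] [DecidableEq X] [LocallyFiniteOrder X]
    (L : IncidenceAlgebra R X →ₗ[R] IncidenceAlgebra R X) : Prop :=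
  ∀ f g h : IncidenceAlgebra R X,
    L (lieBr (lieBr f g) h) =
      lieBr (lieBr (L f) g) h + lieBr (lieBr f (L g)) h + lieBr (lieBr f g) (L h)

/-- `X` is connected: any two points are joined by a chain of comparabilities. -/
def OrdConnected' (X : Type*) [Preorder X] : Prop :=
  ∀ x y : X, Relation.ReflTransGen (fun a b : X => a ≤ b ∨ b ≤ a) x y

/-- `R` is 2-torsion free. -/
def TwoTorsionFree (R : Type*) [CommRing R] : Prop := ∀ r : R, r + r = 0 → r = 0

/-- A Lie triple derivation is proper: a derivation plus a central-valued linear map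
annihilating second commutators. -/
def IsProperLTD [CommRing R] [Preorder X] [DecidableEq X] [LocallyFiniteOrder X]
    (L : IncidenceAlgebra R X →ₗ[R] IncidenceAlgebra R X) : Prop :=
  ∃ D F : IncidenceAlgebra R X →ₗ[R] IncidenceAlgebra R X,
    (∀ f g : IncidenceAlgebra R X, D (f * g) = D f * g + f * D g) ∧
    (∀ f : IncidenceAlgebra R X, F f ∈ Set.center (IncidenceAlgebra R X)) ∧
    (∀ f g h : IncidenceAlgebra R X, F (lieBr (lieBr f g) h) = 0) ∧
    L = D + F

set_option maxHeartbeats 4000000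

/-- Every Lie triple derivation of the incidence algebra of a finite
connected pre-ordered set over a 2-torsion free commutative ring is proper. -/
theorem lieTripleDer_proper_finite_connected [CommRing R] [Preorder X] [DecidableEq X]
    [Fintype X] [LocallyFiniteOrder X]
    (htf : TwoTorsionFree R) (hconn : OrdConnected' X)
    (L : IncidenceAlgebra R X →ₗ[R] IncidenceAlgebra R X) (hL : IsLieTripleDer L) :
    IsProperLTD L := by
  classical
  -- Step 1: structure of L on the diagonal idempotents
  have hz2 : ∀ w : IncidenceAlgebra R X, lieBr 0 w = 0 := fun w => by simp [lieBr]
  have hzpp : ∀ u t : X, lieBr (matrixUnit u u) (matrixUnit t t) = (0 : IncidenceAlgebra R X) := by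
    intro u t
    by_cases h : u = t
    · subst h; simp [lieBr]
    · rw [lieBr, matrixUnit_mul_matrixUnit_ne h, matrixUnit_mul_matrixUnit_ne (Ne.symm h),
        sub_zero]
  have E1a : ∀ u s t : X, s ≠ t → u ≠ s → u ≠ t →
      L (matrixUnit u u) s t = 0 := by
    intro u s t hst hus hut
    have E := hL (matrixUnit u u) (matrixUnit t t) (matrixUnit t t)
    rw [hzpp, hz2, map_zero, hz2] at E
    have E' := congrArg (fun z : IncidenceAlgebra R X => z s t) E
    simp only [lieBr, IncidenceAlgebra.add_apply, IncidenceAlgebra.sub_apply, IncidenceAlgebra.zero_apply, mul_matrixUnit, matrixUnit_mul] at E'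
    simp only [le_refl, and_true, and_self, if_true, hst, Ne.symm hus, Ne.symm hut,
      if_false, sub_zero, zero_sub, add_zero, zero_add, sub_self] at E'
    linear_combination -E'
  have E1b : ∀ s t : X, s ≠ t →
      L (matrixUnit s s) s t + L (matrixUnit t t) s t = 0 := by
    intro s t hst
    have E := hL (matrixUnit s s) (matrixUnit t t) (matrixUnit t t)
    rw [hzpp, hz2, map_zero, hz2] at E
    have E' := congrArg (fun z : IncidenceAlgebra R X => z s t) E
    simp only [lieBr, IncidenceAlgebra.add_apply, IncidenceAlgebra.sub_apply, IncidenceAlgebra.zero_apply, mul_matrixUnit, matrixUnit_mul] at E'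
    simp only [le_refl, and_true, and_self, if_true, hst, Ne.symm hst,
      if_false, sub_zero, zero_sub, add_zero, zero_add, sub_self] at E'
    linear_combination -E'
  -- Step 2: the inner correction
  set b : IncidenceAlgebra R X :=
    ⟨fun s t => if s = t then 0 else L (matrixUnit t t) s t, by
      intro a c hac
      rw [if_neg (fun h => hac (le_of_eq h)), apply_eq_zero_of_not_le hac]⟩ with hb
  have hbapp : ∀ s t : X, b s t = if s = t then 0 else L (matrixUnit t t) s t := fun s t => rfl
  set adB : IncidenceAlgebra R X →ₗ[R] IncidenceAlgebra R X :=
    LinearMap.mulLeft R b - LinearMap.mulRight R b with hadBdef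
  have hadBapp : ∀ f, adB f = b * f - f * b := fun f => rfl
  have hadB : ∀ f g : IncidenceAlgebra R X, adB (f * g) = adB f * g + f * adB g := by
    intro f g
    simp only [hadBapp]
    noncomm_ring
  set L₁ : IncidenceAlgebra R X →ₗ[R] IncidenceAlgebra R X := L - adB with hL₁def
  have hL₁app : ∀ f, L₁ f = L f - adB f := fun f => rfl
  have hL1 : IsLieTripleDer L₁ := by
    intro f g h
    have h2 := derivation_isLTD' (fun x => adB x) hadB (fun x y => map_sub adB x y) f g h
    have h0 : L₁ (lieBr (lieBr f g) h) =
        L (lieBr (lieBr f g) h) - adB (lieBr (lieBr f g) h) := rfl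
    rw [h0, hL f g h, h2]
    simp only [hL₁app, lieBr_sub_left, lieBr_sub_right]
    abel
  -- Step 3: L₁ is diagonal on the idempotents
  have C1 : ∀ u s t : X, s ≠ t → L₁ (matrixUnit u u) s t = 0 := by
    intro u s t hst
    have h0 : L₁ (matrixUnit u u) s t
        = L (matrixUnit u u) s t - (((b * matrixUnit u u : IncidenceAlgebra R X)) s t - ((matrixUnit u u * b : IncidenceAlgebra R X)) s t) := rfl
    rw [h0, mul_matrixUnit, matrixUnit_mul]
    by_cases htu : t = u <;> by_cases hsu : s = u
    · exact absurd (hsu.trans htu.symm) hst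
    · rw [if_pos ⟨htu, le_refl u⟩, if_neg (fun hc : s = u ∧ u ≤ u => hsu hc.1),
        hbapp, if_neg hsu, htu]
      ring
    · have hut : u ≠ t := fun h => hst (hsu.trans h)
      rw [if_neg (fun hc : t = u ∧ u ≤ u => htu hc.1), if_pos ⟨hsu, le_refl u⟩,
        hbapp, if_neg (fun h : u = t => hut h), hsu]
      linear_combination E1b u t hut
    · rw [if_neg (fun hc : t = u ∧ u ≤ u => htu hc.1),
        if_neg (fun hc : s = u ∧ u ≤ u => hsu hc.1)]
      rw [E1a u s t hst (Ne.symm hsu) (Ne.symm htu)]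
      ring
  -- Step 4: support of L₁ on off-diagonal units, and diagonal constancy
  have S1A : ∀ x y s t : X, x ≤ y → x ≠ y → s ≠ y → t ≠ y →
      L₁ (matrixUnit x y) s t = 0 := by
    intro x y s t hxy hne hsy hty
    have E := hL1 (matrixUnit x y) (matrixUnit y y) (matrixUnit y y)
    rw [lieBr_py hxy hne, lieBr_py hxy hne] at E
    have E' := congrArg (fun z : IncidenceAlgebra R X => z s t) E
    simp only [lieBr, sub_mul, mul_sub, IncidenceAlgebra.add_apply, IncidenceAlgebra.sub_apply, mul_matrixUnit, matrixUnit_mul] at E'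
    simp only [le_refl, and_true, hsy, hty, if_false, and_false, false_and,
      C1 y y t (Ne.symm hty), ite_self, sub_zero, zero_sub, add_zero, zero_add,
      neg_zero, sub_self] at E'
    exact E'
  have S1C : ∀ x y s t : X, x ≤ y → x ≠ y → s ≠ x → t ≠ x →
      L₁ (matrixUnit x y) s t = 0 := by
    intro x y s t hxy hne hsx htx
    have E := hL1 (matrixUnit x y) (matrixUnit x x) (matrixUnit x x)
    have hpx2 : lieBr (lieBr (matrixUnit x y) (matrixUnit x x)) (matrixUnit x x)
        = (matrixUnit x y : IncidenceAlgebra R X) := by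
      rw [lieBr_px hxy hne, lieBr_neg_left, lieBr_px hxy hne, neg_neg]
    rw [hpx2, lieBr_px hxy hne, lieBr_neg_left] at E
    have E' := congrArg (fun z : IncidenceAlgebra R X => z s t) E
    simp only [lieBr, IncidenceAlgebra.add_apply, IncidenceAlgebra.sub_apply, IncidenceAlgebra.neg_apply, mul_matrixUnit, matrixUnit_mul] at E'
    simp only [le_refl, and_true, hsx, htx, if_false, and_false, false_and,
      C1 x s x hsx, ite_self, sub_zero, zero_sub, add_zero, zero_add,
      neg_zero, neg_neg, sub_self] at E'
    exact E'
  have S1 : ∀ x y s t : X, x ≤ y → x ≠ y → ¬(s = x ∧ t = y) → ¬(s = y ∧ t = x) →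
      L₁ (matrixUnit x y) s t = 0 := by
    intro x y s t hxy hne h1 h2
    by_cases hsy : s = y
    · by_cases htx : t = x
      · exact absurd ⟨hsy, htx⟩ h2
      · exact S1C x y s t hxy hne (fun h => hne (h.symm.trans hsy)) htx
    · by_cases hty : t = y
      · by_cases hsx : s = x
        · exact absurd ⟨hsx, hty⟩ h1
        · exact S1C x y s t hxy hne hsx (fun h => hne (h.symm.trans hty))
      · exact S1A x y s t hxy hne hsy hty
  have hdiag : ∀ u x y : X, x ≤ y → L₁ (matrixUnit u u) x x = L₁ (matrixUnit u u) y y := by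
    intro u x y hxy
    rcases eq_or_ne x y with rfl | hne
    · rfl
    by_cases huy : u = y
    · subst huy
      have E := hL1 (matrixUnit x u) (matrixUnit u u) (matrixUnit u u)
      rw [lieBr_py hxy hne, lieBr_py hxy hne] at E
      have E' := congrArg (fun z : IncidenceAlgebra R X => z x u) E
      simp only [lieBr, sub_mul, mul_sub, IncidenceAlgebra.add_apply, IncidenceAlgebra.sub_apply, mul_matrixUnit, matrixUnit_mul] at E'
      simp only [le_refl, and_true, hne, hxy, if_true, if_false, and_false, false_and,
        ite_self, sub_zero, zero_sub, add_zero, zero_add, neg_zero, sub_self, and_self] at E'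
      have key : (L₁ (matrixUnit u u)) x x - (L₁ (matrixUnit u u)) u u = 0 :=
        htf _ (by linear_combination E')
      linear_combination key
    by_cases hux : u = x
    · subst hux
      have E := hL1 (matrixUnit u y) (matrixUnit u u) (matrixUnit u u)
      have hpx2 : lieBr (lieBr (matrixUnit u y) (matrixUnit u u)) (matrixUnit u u)
          = (matrixUnit u y : IncidenceAlgebra R X) := by
        rw [lieBr_px hxy hne, lieBr_neg_left, lieBr_px hxy hne, neg_neg]
      rw [hpx2, lieBr_px hxy hne, lieBr_neg_left] at E
      have E' := congrArg (fun z : IncidenceAlgebra R X => z u y) E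
      simp only [lieBr, IncidenceAlgebra.add_apply, IncidenceAlgebra.sub_apply, IncidenceAlgebra.neg_apply, mul_matrixUnit, matrixUnit_mul] at E'
      simp only [le_refl, and_true, hne, Ne.symm hne, hxy, if_true, if_false, and_false,
        false_and, ite_self, sub_zero, zero_sub, add_zero, zero_add, neg_zero, neg_neg,
        sub_self, and_self] at E'
      have key : (L₁ (matrixUnit u u)) u u - (L₁ (matrixUnit u u)) y y = 0 :=
        htf _ (by linear_combination -E')
      linear_combination key
    · have E := hL1 (matrixUnit x y) (matrixUnit y y) (matrixUnit u u)
      rw [lieBr_py hxy hne] at E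
      have hyu : y ≠ u := fun h => huy h.symm
      have hxu : x ≠ u := fun h => hux h.symm
      have hz3 : lieBr (matrixUnit x y) (matrixUnit u u) = (0 : IncidenceAlgebra R X) := by
        rw [lieBr, matrixUnit_mul_matrixUnit_ne hyu,
          matrixUnit_mul_matrixUnit_ne (fun h : u = x => hux h), sub_zero]
      rw [hz3, map_zero] at E
      have E' := congrArg (fun z : IncidenceAlgebra R X => z x y) E
      simp only [lieBr, IncidenceAlgebra.add_apply, IncidenceAlgebra.sub_apply, IncidenceAlgebra.zero_apply, mul_matrixUnit, matrixUnit_mul] at E'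
      simp only [le_refl, and_true, hne, Ne.symm hne, hxy, hyu, hxu, huy, hux,
        if_true, if_false, and_false, false_and, ite_self, sub_zero, zero_sub, add_zero,
        zero_add, neg_zero, sub_self, and_self] at E'
      linear_combination E'
  have hconst : ∀ u x y : X, L₁ (matrixUnit u u) x x = L₁ (matrixUnit u u) y y := by
    intro u x y
    induction hconn x y with
    | refl => rfl
    | tail _ hstep ih =>
        rename_i c d _
        rcases hstep with h | h
        · exact ih.trans (hdiag u c d h)
        · exact ih.trans (hdiag u d c h).symm
  -- Step 5: the sigma coefficients
  have E5 : ∀ x y : X, x ≤ y → y ≤ x → x ≠ y → ∀ s t : X,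
      (L₁ (matrixUnit x y)) s t + (L₁ (matrixUnit x y)) s t =
        (lieBr (lieBr (L₁ (matrixUnit x y)) (matrixUnit y x)) (matrixUnit x y)
          + lieBr (lieBr (matrixUnit x y) (L₁ (matrixUnit y x))) (matrixUnit x y)
          + lieBr (matrixUnit x x - matrixUnit y y) (L₁ (matrixUnit x y))) s t := by
    intro x y hxy hyx hne s t
    have inner : lieBr (matrixUnit x y) (matrixUnit y x)
        = (matrixUnit x x - matrixUnit y y : IncidenceAlgebra R X) := by
      rw [lieBr, matrixUnit_mul_matrixUnit hxy hyx, matrixUnit_mul_matrixUnit hyx hxy]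
    have outer : lieBr (matrixUnit x x - matrixUnit y y) (matrixUnit x y)
        = (matrixUnit x y + matrixUnit x y : IncidenceAlgebra R X) := by
      rw [lieBr, sub_mul, mul_sub, matrixUnit_mul_matrixUnit (le_refl x) hxy,
        matrixUnit_mul_matrixUnit_ne (Ne.symm hne) y y,
        matrixUnit_mul_matrixUnit_ne (Ne.symm hne) x x,
        matrixUnit_mul_matrixUnit hxy (le_refl y), sub_zero, zero_sub, sub_neg_eq_add]
    have E := hL1 (matrixUnit x y) (matrixUnit y x) (matrixUnit x y)
    rw [inner, outer, map_add] at E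
    exact congrArg (fun z : IncidenceAlgebra R X => z s t) E
  have hanti : ∀ x y : X, x ≤ y → y ≤ x → x ≠ y →
      L₁ (matrixUnit x y) x y + L₁ (matrixUnit y x) y x = 0 := by
    intro x y hxy hyx hne
    have E' := E5 x y hxy hyx hne x y
    simp only [lieBr, sub_mul, mul_sub, IncidenceAlgebra.add_apply, IncidenceAlgebra.sub_apply, mul_matrixUnit, matrixUnit_mul] at E'
    simp only [le_refl, and_true, and_self, hxy, hyx, hne, Ne.symm hne, if_true, if_false,
      and_false, false_and, ite_self, sub_zero, zero_sub, add_zero, zero_add, neg_zero,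
      sub_self,
      S1A x y x x hxy hne hne hne, S1C x y y y hxy hne (Ne.symm hne) (Ne.symm hne),
      S1A y x y y hyx (Ne.symm hne) (Ne.symm hne) (Ne.symm hne),
      S1C y x x x hyx (Ne.symm hne) hne hne] at E'
    exact htf _ (by linear_combination -E')
  have htau : ∀ x y : X, x ≤ y → y ≤ x → x ≠ y → L₁ (matrixUnit x y) y x = 0 := by
    intro x y hxy hyx hne
    have E' := E5 x y hxy hyx hne y x
    simp only [lieBr, sub_mul, mul_sub, IncidenceAlgebra.add_apply, IncidenceAlgebra.sub_apply, mul_matrixUnit, matrixUnit_mul] at E'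
    simp only [le_refl, and_true, and_self, hxy, hyx, hne, Ne.symm hne, if_true, if_false,
      and_false, false_and, ite_self, sub_zero, zero_sub, add_zero, zero_add, neg_zero,
      sub_self,
      S1A x y x x hxy hne hne hne, S1C x y y y hxy hne (Ne.symm hne) (Ne.symm hne),
      S1A y x y y hyx (Ne.symm hne) (Ne.symm hne) (Ne.symm hne),
      S1C y x x x hyx (Ne.symm hne) hne hne] at E'
    have h1 := htf _ (show (L₁ (matrixUnit x y) y x + L₁ (matrixUnit x y) y x)
      + (L₁ (matrixUnit x y) y x + L₁ (matrixUnit x y) y x) = 0 by linear_combination E')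
    exact htf _ h1
  have hsupp : ∀ x y : X, x ≠ y →
      L₁ (matrixUnit x y) = (L₁ (matrixUnit x y) x y) • matrixUnit x y := by
    intro x y hne
    by_cases hxy : x ≤ y
    · ext s t hst
      rw [constSMul_apply, matrixUnit_apply, smul_eq_mul]
      by_cases h1 : s = x ∧ t = y
      · rw [h1.1, h1.2]; simp [hxy]
      · rw [if_neg (fun hc => h1 ⟨hc.1, hc.2.1⟩), mul_zero]
        by_cases h2 : s = y ∧ t = x
        · rw [h2.1, h2.2]; exact htau x y hxy (by rw [← h2.1, ← h2.2]; exact hst) hne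
        · exact S1 x y s t hxy hne h1 h2
    · rw [matrixUnit_eq_zero hxy, map_zero]
      simp
  have hadd : ∀ x y z : X, x ≤ y → y ≤ z → x ≠ y → y ≠ z → x ≠ z →
      L₁ (matrixUnit x z) x z = L₁ (matrixUnit x y) x y + L₁ (matrixUnit y z) y z := by
    intro x y z hxy hyz hnxy hnyz hnxz
    have inner : lieBr (matrixUnit x y) (matrixUnit y z)
        = (matrixUnit x z : IncidenceAlgebra R X) := by
      rw [lieBr, matrixUnit_mul_matrixUnit hxy hyz,
        matrixUnit_mul_matrixUnit_ne (fun h : z = x => hnxz h.symm), sub_zero]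
    have E := hL1 (matrixUnit x y) (matrixUnit y z) (matrixUnit z z)
    rw [inner, lieBr_py (hxy.trans hyz) hnxz] at E
    have E' := congrArg (fun w : IncidenceAlgebra R X => w x z) E
    simp only [lieBr, sub_mul, mul_sub, IncidenceAlgebra.add_apply, IncidenceAlgebra.sub_apply, mul_matrixUnit, matrixUnit_mul] at E'
    simp only [le_refl, and_true, and_self, hxy, hyz, hxy.trans hyz, hnxy, hnyz, hnxz,
      Ne.symm hnxy, Ne.symm hnyz, Ne.symm hnxz, if_true, if_false, and_false, false_and,
      ite_self, sub_zero, zero_sub, add_zero, zero_add, neg_zero, sub_self] at E'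
    linear_combination E' + hconst z z x
  have hclass : ∀ x y : X, x ≤ y → y ≤ x →
      L₁ (matrixUnit x x) x x = L₁ (matrixUnit y y) y y := by
    intro x y hxy hyx
    rcases eq_or_ne x y with rfl | hne
    · rfl
    have inner : lieBr (matrixUnit x x) (matrixUnit x y)
        = (matrixUnit x y : IncidenceAlgebra R X) := by
      rw [lieBr, matrixUnit_mul_matrixUnit (le_refl x) hxy,
        matrixUnit_mul_matrixUnit_ne (Ne.symm hne) x x, sub_zero]
    have inner2 : lieBr (matrixUnit x y) (matrixUnit y x)
        = (matrixUnit x x - matrixUnit y y : IncidenceAlgebra R X) := by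
      rw [lieBr, matrixUnit_mul_matrixUnit hxy hyx, matrixUnit_mul_matrixUnit hyx hxy]
    have E := hL1 (matrixUnit x x) (matrixUnit x y) (matrixUnit y x)
    rw [inner, inner2, map_sub] at E
    have E' := congrArg (fun w : IncidenceAlgebra R X => w x x) E
    simp only [lieBr, sub_mul, mul_sub, IncidenceAlgebra.add_apply, IncidenceAlgebra.sub_apply, mul_matrixUnit, matrixUnit_mul] at E'
    simp only [le_refl, and_true, and_self, hxy, hyx, hne, Ne.symm hne, if_true, if_false,
      and_false, false_and, ite_self, sub_zero, zero_sub, add_zero, zero_add, neg_zero,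
      sub_self] at E'
    linear_combination E' + hconst y x y + hconst x x y + hanti x y hxy hyx hne
  -- Final assembly
  have hdiagfull : ∀ u : X, L₁ (matrixUnit u u)
      = (L₁ (matrixUnit u u) u u) • (1 : IncidenceAlgebra R X) := by
    intro u
    ext s t hst
    rw [constSMul_apply, one_apply, smul_eq_mul]
    rcases eq_or_ne s t with rfl | hne
    · rw [if_pos rfl, mul_one]
      exact hconst u s u
    · rw [if_neg hne, mul_zero]
      exact C1 u s t hne
  set σ : X → X → R := fun x y => if x = y then 0 else L₁ (matrixUnit x y) x y with hσ
  set d : X → R := fun u => L₁ (matrixUnit u u) u u with hd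
  have hσcoc : ∀ u z v : X, u ≤ z → z ≤ v → σ u v = σ u z + σ z v := by
    intro u z v huz hzv
    by_cases h1 : u = z
    · subst h1; simp only [hσ, if_pos rfl, zero_add]
    by_cases h2 : z = v
    · subst h2; simp only [hσ, if_pos rfl, add_zero]
    by_cases h3 : u = v
    · subst h3
      simp only [hσ, if_pos rfl, if_neg h1, if_neg h2]
      linear_combination -(hanti u z huz hzv h1)
    · simp only [hσ, if_neg h1, if_neg h2, if_neg h3]
      exact hadd u z v huz hzv h1 h2 h3
  have hsuppσ : ∀ x y : X, x ≠ y →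
      L₁ (matrixUnit x y) = σ x y • matrixUnit x y := by
    intro x y hne
    simp only [hσ]
    rw [if_neg hne]
    exact hsupp x y hne
  set Dmap : IncidenceAlgebra R X →ₗ[R] IncidenceAlgebra R X :=
    { toFun := fun f => ⟨fun u v => σ u v * f u v, fun a c hac => by
        rw [apply_eq_zero_of_not_le hac f, mul_zero]⟩
      map_add' := by
        intro f g
        ext u v _
        simp only [coe_mk, IncidenceAlgebra.add_apply, mul_add]
      map_smul' := by
        intro r f
        ext u v _
        simp only [coe_mk, constSMul_apply, smul_eq_mul, RingHom.id_apply]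
        ring } with hDmap
  have hDapp : ∀ (f : IncidenceAlgebra R X) (u v : X), Dmap f u v = σ u v * f u v :=
    fun _ _ _ => rfl
  have hDder : ∀ f g : IncidenceAlgebra R X, Dmap (f * g) = Dmap f * g + f * Dmap g := by
    intro f g
    ext u v huv
    rw [hDapp, mul_apply, IncidenceAlgebra.add_apply, mul_apply, mul_apply, Finset.mul_sum,
      ← Finset.sum_add_distrib]
    refine Finset.sum_congr rfl fun z hz => ?_
    rw [Finset.mem_Icc] at hz
    rw [hDapp, hDapp, hσcoc u z v hz.1 hz.2]
    ring
  set Fmap : IncidenceAlgebra R X →ₗ[R] IncidenceAlgebra R X :=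
    { toFun := fun f => (∑ x : X, d x * f x x) • (1 : IncidenceAlgebra R X)
      map_add' := by
        intro f g
        rw [← add_smul]
        congr 1
        rw [← Finset.sum_add_distrib]
        refine Finset.sum_congr rfl fun x _ => ?_
        rw [IncidenceAlgebra.add_apply, mul_add]
      map_smul' := by
        intro r f
        dsimp only [RingHom.id_apply]
        rw [smul_smul, Finset.mul_sum]
        congr 1
        refine Finset.sum_congr rfl fun x _ => ?_
        rw [constSMul_apply, smul_eq_mul]
        ring } with hFmap
  have hFapp : ∀ f : IncidenceAlgebra R X,
      Fmap f = (∑ x : X, d x * f x x) • (1 : IncidenceAlgebra R X) := fun _ => rfl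
  have hkey : ∀ u v : IncidenceAlgebra R X, ∑ x : X, d x * (lieBr u v) x x = 0 := by
    intro u v
    have h1 : ∀ x : X, d x * (lieBr u v) x x
        = (∑ z : X, if z ∈ Finset.Icc x x then d x * (u x z * v z x) else 0)
          - (∑ z : X, if z ∈ Finset.Icc x x then d x * (v x z * u z x) else 0) := by
      intro x
      rw [lieBr, IncidenceAlgebra.sub_apply, mul_apply, mul_apply, mul_sub, Finset.mul_sum, Finset.mul_sum,
        Finset.sum_ite_mem, Finset.sum_ite_mem, Finset.univ_inter]
    rw [Finset.sum_congr rfl fun x _ => h1 x, Finset.sum_sub_distrib, sub_eq_zero,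
      Finset.sum_comm]
    refine Finset.sum_congr rfl fun a _ => Finset.sum_congr rfl fun c _ => ?_
    by_cases h : c ≤ a ∧ a ≤ c
    · rw [if_pos, if_pos]
      · have heq := hclass a c h.2 h.1
        simp only [hd]
        rw [heq]
        ring
      · rw [Finset.mem_Icc]; exact ⟨h.2, h.1⟩
      · rw [Finset.mem_Icc]; exact ⟨h.1, h.2⟩
    · rw [if_neg, if_neg]
      · rw [Finset.mem_Icc]; exact fun hc => h ⟨hc.2, hc.1⟩
      · rw [Finset.mem_Icc]; exact fun hc => h ⟨hc.1, hc.2⟩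
  have hbasiseq : ∀ x y : X,
      L₁ (matrixUnit x y) = Dmap (matrixUnit x y) + Fmap (matrixUnit x y) := by
    intro x y
    rcases eq_or_ne x y with rfl | hne
    · rw [hdiagfull x]
      have hD0 : Dmap (matrixUnit x x) = 0 := by
        ext u v _
        rw [hDapp, IncidenceAlgebra.zero_apply, matrixUnit_apply]
        by_cases h : u = x ∧ v = x ∧ x ≤ x
        · rw [if_pos h, mul_one]
          simp only [hσ]
          rw [if_pos (h.1.trans h.2.1.symm)]
        · rw [if_neg h, mul_zero]
      have hF : Fmap (matrixUnit x x) = d x • (1 : IncidenceAlgebra R X) := by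
        rw [hFapp]
        congr 1
        rw [Finset.sum_eq_single x]
        · rw [matrixUnit_apply, if_pos ⟨rfl, rfl, le_refl x⟩, mul_one]
        · intro c _ hc
          rw [matrixUnit_apply, if_neg (fun hh => hc hh.1), mul_zero]
        · intro hx; exact absurd (Finset.mem_univ x) hx
      rw [hD0, hF, zero_add, hd]
    · rw [hsuppσ x y hne]
      have hF0 : Fmap (matrixUnit x y) = 0 := by
        rw [hFapp]
        have : ∀ c : X, d c * matrixUnit (R := R) x y c c = 0 := by
          intro c
          rw [matrixUnit_apply]
          by_cases h : c = x ∧ c = y ∧ x ≤ y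
          · exact absurd (h.1.symm.trans h.2.1) hne
          · rw [if_neg h, mul_zero]
        rw [Finset.sum_congr rfl fun c _ => this c, Finset.sum_const_zero, zero_smul]
      have hD : Dmap (matrixUnit x y) = σ x y • matrixUnit x y := by
        ext u v _
        rw [hDapp, constSMul_apply, smul_eq_mul, matrixUnit_apply]
        by_cases h : u = x ∧ v = y ∧ x ≤ y
        · rw [if_pos h, mul_one, mul_one, h.1, h.2.1]
        · rw [if_neg h, mul_zero, mul_zero]
      rw [hD, hF0, add_zero]
  have key2 : ∀ f : IncidenceAlgebra R X, L₁ f = Dmap f + Fmap f := by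
    intro f
    have hM : L₁ f = (Dmap + Fmap) f := by
      conv_lhs => rw [basis_decomp f]
      conv_rhs => rw [basis_decomp f]
      rw [map_sum, map_sum]
      refine Finset.sum_congr rfl fun x _ => ?_
      rw [map_sum, map_sum]
      refine Finset.sum_congr rfl fun y _ => ?_
      rw [map_smul, map_smul, hbasiseq x y, LinearMap.add_apply]
    rw [hM, LinearMap.add_apply]
  refine ⟨adB + Dmap, Fmap, ?_, ?_, ?_, ?_⟩
  · intro f g
    simp only [LinearMap.add_apply, hadB, hDder]
    noncomm_ring
  · intro f
    rw [Semigroup.mem_center_iff]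
    intro g
    rw [hFapp]
    rw [ia_mul_smul, ia_smul_mul, mul_one, one_mul]
  · intro f g h
    rw [hFapp, hkey (lieBr f g) h, zero_smul]
  · apply LinearMap.ext
    intro f
    have h1 : L f = L₁ f + adB f := by rw [hL₁app]; abel
    rw [h1, key2 f]
    simp only [LinearMap.add_apply]
    abel
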